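/- Let F : ℝ^n → ℝ^n be μ-cocoercive on a set U ⊆ ℝ^n for some μ > 0, and let Γ = diag(γ_1,…,γ_n) with γ_j > 0 for all j. Equip ℝ^n with the weighted inner product ⟨x, y⟩_{Γ^{-1}} = Σ_j γ_j^{-1} x_j y_j and induced norm ‖·‖_{Γ^{-1}}. Then for all u, u' ∈ U, ⟨ΓF(u) − ΓF(u'), u − u'⟩_{Γ^{-1}} ≥ (μ / max_j γ_j) ‖ΓF(u) − ΓF(u')‖²_{Γ^{-1}}. In particular, if γ_j ∈ (0, 2μ) for all j, then ΓF is (1/2)-cocoercive with respect to the inner product ⟨·,·⟩_{Γ^{-1}}. -/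

import Mathlib

open RealInnerProductSpace

/-- Cocoercivity of `Γ F` in the weighted inner product
`⟪x, y⟫_{Γ⁻¹} = ∑ j, γⱼ⁻¹ xⱼ yⱼ`: if `F` is `μ`-cocoercive on `U` (in the
Euclidean inner product) and `Γ = diag(γ₁,…,γₙ)` with `γⱼ > 0`, then
`⟪ΓF(u) − ΓF(u'), u − u'⟫_{Γ⁻¹} ≥ (μ / maxⱼ γⱼ) ‖ΓF(u) − ΓF(u')‖²_{Γ⁻¹}`;
in particular, if `γⱼ ∈ (0, 2μ)` for all `j`, then `ΓF` is `(1/2)`-cocoercive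
with respect to `⟪·,·⟫_{Γ⁻¹}`. -/
theorem weighted_cocoercivity_of_diagonal_scaling
    (n : ℕ) (hn : 0 < n) (U : Set (EuclideanSpace ℝ (Fin n)))
    (F : EuclideanSpace ℝ (Fin n) → EuclideanSpace ℝ (Fin n))
    (μ : ℝ) (hμ : 0 < μ)
    (hcoco : ∀ u ∈ U, ∀ u' ∈ U, ⟪F u - F u', u - u'⟫ ≥ μ * ‖F u - F u'‖ ^ 2)
    (γ : Fin n → ℝ) (hγpos : ∀ j, 0 < γ j) :
    (∀ u ∈ U, ∀ u' ∈ U,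
      ∑ j, (γ j)⁻¹ * ((γ j * F u j - γ j * F u' j) * (u j - u' j)) ≥
        (μ / Finset.univ.sup' ⟨⟨0, hn⟩, Finset.mem_univ _⟩ γ) *
          ∑ j, (γ j)⁻¹ * (γ j * F u j - γ j * F u' j) ^ 2) ∧
    ((∀ j, γ j < 2 * μ) → ∀ u ∈ U, ∀ u' ∈ U,
      ∑ j, (γ j)⁻¹ * ((γ j * F u j - γ j * F u' j) * (u j - u' j)) ≥
        (1 / 2) * ∑ j, (γ j)⁻¹ * (γ j * F u j - γ j * F u' j) ^ 2) := by
  set M := Finset.univ.sup' ⟨⟨0, hn⟩, Finset.mem_univ _⟩ γ with hM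
  have hle : ∀ j, γ j ≤ M := fun j => Finset.le_sup' γ (Finset.mem_univ j)
  have hMpos : 0 < M := lt_of_lt_of_le (hγpos ⟨0, hn⟩) (hle ⟨0, hn⟩)
  have key : ∀ u ∈ U, ∀ u' ∈ U,
      ∑ j, (γ j)⁻¹ * ((γ j * F u j - γ j * F u' j) * (u j - u' j))
        ≥ μ * ∑ j, (F u j - F u' j) ^ 2 := by
    intro u hu u' hu'
    have h1 : ∑ j, (γ j)⁻¹ * ((γ j * F u j - γ j * F u' j) * (u j - u' j))
        = ∑ j, (F u j - F u' j) * (u j - u' j) := by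
      refine Finset.sum_congr rfl fun j _ => ?_
      have := (hγpos j).ne'
      field_simp
    have h2 : ⟪F u - F u', u - u'⟫ = ∑ j, (F u j - F u' j) * (u j - u' j) := by
      simp [PiLp.inner_apply, PiLp.sub_apply]
      exact Finset.sum_congr rfl fun j _ => mul_comm _ _
    have h3 : ‖F u - F u'‖ ^ 2 = ∑ j, (F u j - F u' j) ^ 2 := by
      rw [← real_inner_self_eq_norm_sq]
      simp only [PiLp.inner_apply, PiLp.sub_apply, sq, RCLike.inner_apply, conj_trivial]
    have h := hcoco u hu u' hu'
    rw [h2, h3] at h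
    rw [h1]; exact h
  have hwsum : ∀ u u' : EuclideanSpace ℝ (Fin n),
      ∑ j, (γ j)⁻¹ * (γ j * F u j - γ j * F u' j) ^ 2
        = ∑ j, γ j * (F u j - F u' j) ^ 2 := by
    intro u u'
    refine Finset.sum_congr rfl fun j _ => ?_
    have := (hγpos j).ne'
    field_simp
  constructor
  · intro u hu u' hu'
    rw [hwsum]
    refine le_trans ?_ (key u hu u' hu')
    have hb : ∑ j, γ j * (F u j - F u' j) ^ 2 ≤ M * ∑ j, (F u j - F u' j) ^ 2 := by
      rw [Finset.mul_sum]
      exact Finset.sum_le_sum fun j _ =>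
        mul_le_mul_of_nonneg_right (hle j) (sq_nonneg _)
    calc μ / M * ∑ j, γ j * (F u j - F u' j) ^ 2
        ≤ μ / M * (M * ∑ j, (F u j - F u' j) ^ 2) :=
          mul_le_mul_of_nonneg_left hb (by positivity)
      _ = μ * ∑ j, (F u j - F u' j) ^ 2 := by field_simp
  · intro hlt u hu u' hu'
    rw [hwsum]
    refine le_trans ?_ (key u hu u' hu')
    rw [Finset.mul_sum, Finset.mul_sum]
    refine Finset.sum_le_sum fun j _ => ?_
    have : (1 / 2 : ℝ) * γ j ≤ μ := by linarith [hlt j]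
    calc (1 / 2 : ℝ) * (γ j * (F u j - F u' j) ^ 2)
        = (1 / 2 * γ j) * (F u j - F u' j) ^ 2 := by ring
      _ ≤ μ * (F u j - F u' j) ^ 2 := mul_le_mul_of_nonneg_right this (sq_nonneg _)
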